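/- Let f, g : ℂ → ℂ be meromorphic on ℂ, both doubly periodic with periods ω₁ and ω₂ where Im(ω₂/ω₁) > 0 (i.e. f(z+ω₁) = f(z), f(z+ω₂) = f(z), and likewise for g, for all z), and suppose g is not identically zero. If at every point z ∈ ℂ the order of f at z equals the order of g at z (f and g have the same zeros and poles with the same multiplicities), then there exists a constant C ∈ ℂ, C ≠ 0, such that f(z) = C·g(z) at every point z where both f and g are analytic. (Thus an elliptic function is determined by its zeros and poles up to a nonzero multiplicative constant.) -/

import Mathlib

open Filter Set Topology

lemma aux_decomp (ω₁ ω₂ : ℂ) (him : 0 < (ω₂ / ω₁).im) (z : ℂ) :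
    ∃ (a b : ℝ) (m n : ℤ), a ∈ Set.Icc (0:ℝ) 1 ∧ b ∈ Set.Icc (0:ℝ) 1 ∧
      z - m * ω₁ - n * ω₂ = a * ω₁ + b * ω₂ := by
  have hω₁ : ω₁ ≠ 0 := by
    rintro rfl
    simp at him
  set τ : ℂ := ω₂ / ω₁ with hτ
  have hτim : τ.im ≠ 0 := ne_of_gt him
  set t : ℂ := z / ω₁ with ht
  set b' : ℝ := t.im / τ.im with hb'
  set a' : ℝ := t.re - b' * τ.re with ha'
  have hab : (a' : ℂ) + (b' : ℂ) * τ = t := by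
    apply Complex.ext
    · simp [ha']
    · simp [hb', div_mul_cancel₀ _ hτim]
  have hωτ : ω₁ * τ = ω₂ := mul_div_cancel₀ _ hω₁
  have hz : z = a' * ω₁ + b' * ω₂ :=
    calc z = ω₁ * t := (mul_div_cancel₀ _ hω₁).symm
    _ = ω₁ * ((a' : ℂ) + (b' : ℂ) * τ) := by rw [hab]
    _ = a' * ω₁ + b' * (ω₁ * τ) := by ring
    _ = a' * ω₁ + b' * ω₂ := by rw [hωτ]
  refine ⟨Int.fract a', Int.fract b', ⌊a'⌋, ⌊b'⌋, ⟨Int.fract_nonneg a', (Int.fract_lt_one a').le⟩,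
    ⟨Int.fract_nonneg b', (Int.fract_lt_one b').le⟩, ?_⟩
  rw [hz]
  have h1 : ((Int.fract a' : ℝ) : ℂ) = (a' : ℂ) - (⌊a'⌋ : ℤ) := by
    rw [show Int.fract a' = a' - ⌊a'⌋ from rfl]; push_cast; ring
  have h2 : ((Int.fract b' : ℝ) : ℂ) = (b' : ℂ) - (⌊b'⌋ : ℤ) := by
    rw [show Int.fract b' = b' - ⌊b'⌋ from rfl]; push_cast; ring
  rw [h1, h2]; ring



lemma aux_order_ne_top (g : ℂ → ℂ) (hg : MeromorphicOn g Set.univ) (z₁ : ℂ)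
    (h1 : meromorphicOrderAt g z₁ ≠ ⊤) (z : ℂ) :
    meromorphicOrderAt g z ≠ ⊤ := by
  set S : Set ℂ := {w | ∀ᶠ y in 𝓝[≠] w, g y = 0} with hS
  have hSopen : IsOpen S := by
    rw [isOpen_iff_mem_nhds]
    intro w hw
    have hw' : ∀ᶠ y in 𝓝[≠] w, g y = 0 := hw
    rw [eventually_nhdsWithin_iff, eventually_nhds_iff] at hw'
    obtain ⟨V, hVsub, hVopen, hwV⟩ := hw'
    rw [mem_nhds_iff]
    refine ⟨V, fun v hvV => ?_, hVopen, hwV⟩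
    show ∀ᶠ y in 𝓝[≠] v, g y = 0
    rcases eq_or_ne v w with rfl | hvw
    · exact hw
    · have hmem : V \ {w} ∈ 𝓝 v :=
        (hVopen.sdiff isClosed_singleton).mem_nhds ⟨hvV, hvw⟩
      filter_upwards [nhdsWithin_le_nhds hmem] with y hy
      exact hVsub y hy.1 hy.2
  have hSclosed : IsClosed S := by
    rw [← isOpen_compl_iff, isOpen_iff_mem_nhds]
    intro w hw
    have hw' : meromorphicOrderAt g w ≠ ⊤ := by
      rwa [ne_eq, meromorphicOrderAt_eq_top_iff]
    obtain ⟨n, hn⟩ := WithTop.ne_top_iff_exists.mp hw'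
    obtain ⟨u, huan, hu0, hueq⟩ := ((meromorphicOrderAt_eq_int_iff (n := n) (hg w (Set.mem_univ w)))).mp hn.symm
    have hune : ∀ᶠ y in 𝓝 w, u y ≠ 0 := huan.continuousAt.eventually_ne hu0
    have hgne : ∀ᶠ y in 𝓝[≠] w, g y ≠ 0 := by
      filter_upwards [hueq, nhdsWithin_le_nhds hune, self_mem_nhdsWithin] with y h1 h2 h3
      rw [h1, smul_eq_mul]
      exact mul_ne_zero (zpow_ne_zero _ (sub_ne_zero.mpr h3)) h2
    have hgne' := hgne
    rw [eventually_nhdsWithin_iff, eventually_nhds_iff] at hgne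
    obtain ⟨V, hVsub, hVopen, hwV⟩ := hgne
    rw [mem_nhds_iff]
    refine ⟨V, fun v hvV hvS => ?_, hVopen, hwV⟩
    have hvS' : ∀ᶠ y in 𝓝[≠] v, g y = 0 := hvS
    rcases eq_or_ne v w with rfl | hvw
    · obtain ⟨y, hy1, hy2⟩ := (hvS'.and hgne').exists
      exact hy2 hy1
    · have hmem : V \ {w} ∈ 𝓝 v :=
        (hVopen.sdiff isClosed_singleton).mem_nhds ⟨hvV, hvw⟩
      obtain ⟨y, hy0, hyVw⟩ :=
        (hvS'.and (eventually_nhdsWithin_of_eventually_nhds hmem)).exists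
      exact hVsub y hyVw.1 hyVw.2 hy0
  have : S = ∅ ∨ S = Set.univ := isClopen_iff.mp ⟨hSclosed, hSopen⟩
  rcases this with hSe | hSu
  · intro ht
    have : z ∈ S := meromorphicOrderAt_eq_top_iff.mp ht
    rw [hSe] at this
    exact this
  · exact absurd (meromorphicOrderAt_eq_top_iff.mpr
      (hSu ▸ Set.mem_univ z₁ : z₁ ∈ S)) h1


/-- Two doubly periodic meromorphic functions (elliptic functions) with
the same zeros and poles, counted with multiplicities (i.e. the same order at every
point), agree up to a nonzero multiplicative constant wherever both are analytic. -/
theorem elliptic_determined_by_zeros_and_poles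
    (f g : ℂ → ℂ)
    (hf : MeromorphicOn f Set.univ) (hg : MeromorphicOn g Set.univ)
    (ω₁ ω₂ : ℂ) (him : 0 < (ω₂ / ω₁).im)
    (hfω₁ : ∀ z : ℂ, f (z + ω₁) = f z) (hfω₂ : ∀ z : ℂ, f (z + ω₂) = f z)
    (hgω₁ : ∀ z : ℂ, g (z + ω₁) = g z) (hgω₂ : ∀ z : ℂ, g (z + ω₂) = g z)
    (hg0 : ∃ z : ℂ, g z ≠ 0)
    (horder : ∀ z : ℂ, meromorphicOrderAt f z = meromorphicOrderAt g z) :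
    ∃ C : ℂ, C ≠ 0 ∧
      ∀ z : ℂ, AnalyticAt ℂ f z → AnalyticAt ℂ g z → f z = C * g z := by
  classical
  by_cases htop : ∀ z : ℂ, meromorphicOrderAt g z = ⊤
  · refine ⟨1, one_ne_zero, fun z hfz hgz => ?_⟩
    have hford : meromorphicOrderAt f z = ⊤ := (horder z).trans (htop z)
    have hfe : ∀ᶠ w in 𝓝[≠] z, f w = 0 := meromorphicOrderAt_eq_top_iff.mp hford
    have hge : ∀ᶠ w in 𝓝[≠] z, g w = 0 := meromorphicOrderAt_eq_top_iff.mp (htop z)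
    have hf0 : f z = 0 := tendsto_nhds_unique
      (hfz.continuousAt.continuousWithinAt)
      (Filter.Tendsto.congr' (by filter_upwards [hfe] with w hw using hw.symm)
        tendsto_const_nhds)
    have hg0' : g z = 0 := tendsto_nhds_unique
      (hgz.continuousAt.continuousWithinAt)
      (Filter.Tendsto.congr' (by filter_upwards [hge] with w hw using hw.symm)
        tendsto_const_nhds)
    rw [hf0, hg0', mul_zero]
  · push_neg at htop
    obtain ⟨z₁, hz₁⟩ := htop
    have hgne_top : ∀ z : ℂ, meromorphicOrderAt g z ≠ ⊤ := aux_order_ne_top g hg z₁ hz₁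
    set h : ℂ → ℂ := fun w => f w / g w with hhdef
    have hmh : ∀ z : ℂ, MeromorphicAt h z := fun z =>
      (hf z (Set.mem_univ z)).div (hg z (Set.mem_univ z))
    have key : ∀ z : ℂ, ∃ u : ℂ → ℂ, AnalyticAt ℂ u z ∧ u z ≠ 0 ∧
        ∀ᶠ w in 𝓝[≠] z, h w = u w := by
      intro z
      obtain ⟨n, hn⟩ := WithTop.ne_top_iff_exists.mp (hgne_top z)
      obtain ⟨u₂, hu₂an, hu₂0, hu₂eq⟩ := ((meromorphicOrderAt_eq_int_iff (n := n) (hg z (Set.mem_univ z)))).mp hn.symm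
      obtain ⟨u₁, hu₁an, hu₁0, hu₁eq⟩ :=
        ((meromorphicOrderAt_eq_int_iff (n := n) (hf z (Set.mem_univ z)))).mp ((horder z).trans hn.symm)
      refine ⟨fun w => u₁ w / u₂ w, hu₁an.div hu₂an hu₂0, div_ne_zero hu₁0 hu₂0, ?_⟩
      filter_upwards [hu₁eq, hu₂eq, self_mem_nhdsWithin] with w h1 h2 h3
      have hwz : (w - z) ^ n ≠ 0 := zpow_ne_zero _ (sub_ne_zero.mpr h3)
      show f w / g w = u₁ w / u₂ w
      rw [h1, h2, smul_eq_mul, smul_eq_mul, mul_div_mul_left _ _ hwz]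
    choose u huan hu0 huh using key
    set H : ℂ → ℂ := fun z => u z z with hHdef
    have hT : ∀ z : ℂ, Filter.Tendsto h (𝓝[≠] z) (𝓝 (H z)) := by
      intro z
      have h1 : Filter.Tendsto (u z) (𝓝[≠] z) (𝓝 (u z z)) :=
        (huan z).continuousAt.continuousWithinAt
      exact h1.congr' (by filter_upwards [huh z] with w hw using hw.symm)
    have hHh : ∀ w : ℂ, AnalyticAt ℂ h w → H w = h w := fun w hw =>
      tendsto_nhds_unique (hT w) hw.continuousAt.continuousWithinAt
    have hHan : ∀ z : ℂ, AnalyticAt ℂ H z := by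
      intro z
      have hev : ∀ᶠ w in 𝓝[≠] z, H w = u z w := by
        filter_upwards [(hmh z).eventually_analyticAt, huh z] with w h1 h2
        rw [hHh w h1, h2]
      rw [eventually_nhdsWithin_iff] at hev
      have hev' : ∀ᶠ w in 𝓝 z, u z w = H w := by
        filter_upwards [hev] with w hw
        rcases eq_or_ne w z with rfl | hwz
        · rfl
        · exact (hw hwz).symm
      exact (huan z).congr hev'
    have hper : ∀ ω : ℂ, (∀ w, h (w + ω) = h w) → Function.Periodic H ω := by
      intro ω hω z
      have hmap : Filter.Tendsto (fun w => w + ω) (𝓝[≠] z) (𝓝[≠] (z + ω)) := by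
        rw [nhdsWithin, nhdsWithin]
        refine Filter.tendsto_inf.mpr ⟨?_, ?_⟩
        · exact ((continuous_id.add continuous_const).tendsto z).mono_left inf_le_left
        · refine Filter.tendsto_principal.mpr ?_
          refine Filter.eventually_inf_principal.mpr (Filter.Eventually.of_forall ?_)
          intro w hw hc
          exact hw (add_right_cancel hc)
      have h2 : Filter.Tendsto h (𝓝[≠] z) (𝓝 (H (z + ω))) := by
        have h3 := (hT (z + ω)).comp hmap
        exact h3.congr fun w => hω w
      exact tendsto_nhds_unique h2 (hT z)
    have hωh₁ : ∀ w : ℂ, h (w + ω₁) = h w := fun w => by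
      show f (w + ω₁) / g (w + ω₁) = f w / g w
      rw [hfω₁, hgω₁]
    have hωh₂ : ∀ w : ℂ, h (w + ω₂) = h w := fun w => by
      show f (w + ω₂) / g (w + ω₂) = f w / g w
      rw [hfω₂, hgω₂]
    have hHdiff : Differentiable ℂ H := fun z => (hHan z).differentiableAt
    set K : Set ℂ := (fun p : ℝ × ℝ => (p.1 : ℂ) * ω₁ + (p.2 : ℂ) * ω₂) ''
      (Set.Icc 0 1 ×ˢ Set.Icc 0 1) with hK
    have hKcomp : IsCompact K := (isCompact_Icc.prod isCompact_Icc).image (by fun_prop)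
    have hrange : Set.range H ⊆ H '' K := by
      rintro - ⟨z, rfl⟩
      obtain ⟨a, b, m, n, ha, hb, heq⟩ := aux_decomp ω₁ ω₂ him z
      refine ⟨(a : ℂ) * ω₁ + (b : ℂ) * ω₂, ⟨(a, b), ⟨ha, hb⟩, rfl⟩, ?_⟩
      rw [← heq]
      have p1 : Function.Periodic H ω₁ := hper ω₁ hωh₁
      have p2 : Function.Periodic H ω₂ := hper ω₂ hωh₂
      calc H (z - m * ω₁ - n * ω₂) = H (z - m * ω₁) := p2.sub_int_mul_eq n
      _ = H z := p1.sub_int_mul_eq m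
    have hbdd : Bornology.IsBounded (Set.range H) :=
      ((hKcomp.image hHdiff.continuous).isBounded).subset hrange
    have hconst : ∀ z : ℂ, H z = H 0 := fun z => hHdiff.apply_eq_apply_of_bounded hbdd z 0
    refine ⟨H 0, hu0 0, fun z hfz hgz => ?_⟩
    have hgne : ∀ᶠ w in 𝓝[≠] z, g w ≠ 0 := by
      rcases hgz.eventually_eq_zero_or_eventually_ne_zero with hev | hev
      · exact absurd (meromorphicOrderAt_eq_top_iff.mpr
          (hev.filter_mono nhdsWithin_le_nhds)) (hgne_top z)
      · exact hev
    have T1 : Filter.Tendsto f (𝓝[≠] z) (𝓝 (f z)) := hfz.continuousAt.continuousWithinAt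
    have T2 : Filter.Tendsto (fun w => h w * g w) (𝓝[≠] z) (𝓝 (H 0 * g z)) := by
      have h4 := (hT z).mul
        (hgz.continuousAt.continuousWithinAt : Filter.Tendsto g (𝓝[≠] z) (𝓝 (g z)))
      rwa [hconst z] at h4
    have hfe : ∀ᶠ w in 𝓝[≠] z, f w = h w * g w := by
      filter_upwards [hgne] with w hw
      exact (div_mul_cancel₀ (f w) hw).symm
    exact tendsto_nhds_unique (T1.congr' hfe) T2
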